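/- arXiv:1702.07473 — 3 statements merged into one kernel-verified Lean document; each statement's English description precedes it below -/
import Mathlib

section
/- Let H₁,…,H_N be complex separable Hilbert spaces and for each n let {x_j^(n)} and {y_j^(n)} be Bessel families in H_n over a common measure space (J, Σ, μ). Then the direct-sum families {x_j^(1) ⊕ ⋯ ⊕ x_j^(N)} and {y_j^(1) ⊕ ⋯ ⊕ y_j^(N)} are dual continuous frames for H₁ ⊕ ⋯ ⊕ H_N if and only if (i) for each n, {x_j^(n)} and {y_j^(n)} are dual continuous frames for H_n, and (ii) for each n₁ ≠ n₂, ∫_J ⟨h, x_j^(n₂)⟩ y_j^(n₁) dμ(j) = 0 for all h ∈ H_{n₂} (orthogonality). -/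
open MeasureTheory
open scoped ENNReal NNReal

section Aux

variable {J : Type*} [MeasurableSpace J] {μ : Measure J}

lemma memL2_of_bound {f : J → ℂ} (hm : AEStronglyMeasurable f μ) {C : ℝ≥0∞} (hC : C ≠ ∞)
    (hb : ∫⁻ j, (‖f j‖₊ : ℝ≥0∞) ^ 2 ∂μ ≤ C) : MemLp f 2 μ := by
  refine ⟨hm, ?_⟩
  rw [eLpNorm_eq_lintegral_rpow_enorm_toReal two_ne_zero ENNReal.ofNat_ne_top]
  refine ENNReal.rpow_lt_top_of_nonneg (by positivity) ?_
  have : ∫⁻ j, ‖f j‖ₑ ^ ((2 : ℝ≥0∞).toReal) ∂μ = ∫⁻ j, (‖f j‖₊ : ℝ≥0∞) ^ 2 ∂μ := by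
    congr 1; ext j
    rw [ENNReal.toReal_ofNat, ← ENNReal.rpow_natCast]
    norm_num [enorm_eq_nnnorm]
  rw [this]
  exact (lt_of_le_of_lt hb hC.lt_top).ne

lemma integrable_mul_of_memL2 {f g : J → ℂ} (hf : MemLp f 2 μ) (hg : MemLp g 2 μ) :
    Integrable (fun j => f j * g j) μ := by
  rw [← memLp_one_iff_integrable]
  have h := hg.smul (φ := f) hf (r := 1)
  exact h

end Aux

/-- The direct-sum families `{⊕ₙ x j n}` and `{⊕ₙ y j n}` of Bessel families are dual
continuous frames for the Hilbert direct sum `H₁ ⊕ ⋯ ⊕ H_N` iff each pair `({x n j}, {y n j})`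
is a dual frame pair for `H n` and for `n₁ ≠ n₂` the families `{x n₂ j}` and `{y n₁ j}` are
orthogonal (the weakly defined mixed operator vanishes). -/
theorem stmt_2 {N : ℕ} {H : Fin N → Type*} [∀ n, NormedAddCommGroup (H n)]
    [∀ n, InnerProductSpace ℂ (H n)] [∀ n, CompleteSpace (H n)]
    {J : Type*} [MeasurableSpace J] (μ : Measure J)
    (x y : (n : Fin N) → J → H n)
    (hxmeas : ∀ (n : Fin N) (h : H n),
      AEStronglyMeasurable (fun j => (inner ℂ h (x n j) : ℂ)) μ)
    (hymeas : ∀ (n : Fin N) (h : H n),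
      AEStronglyMeasurable (fun j => (inner ℂ h (y n j) : ℂ)) μ)
    (βx βy : Fin N → ℝ)
    (hxB : ∀ (n : Fin N) (h : H n), ∫⁻ j, (‖(inner ℂ h (x n j) : ℂ)‖₊ : ℝ≥0∞) ^ 2 ∂μ ≤
      ENNReal.ofReal (βx n) * (‖h‖₊ : ℝ≥0∞) ^ 2)
    (hyB : ∀ (n : Fin N) (h : H n), ∫⁻ j, (‖(inner ℂ h (y n j) : ℂ)‖₊ : ℝ≥0∞) ^ 2 ∂μ ≤
      ENNReal.ofReal (βy n) * (‖h‖₊ : ℝ≥0∞) ^ 2) :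
    (∀ h₁ h₂ : PiLp 2 H,
        (inner ℂ h₁ h₂ : ℂ) =
          ∫ j, (inner ℂ h₁ ((WithLp.equiv 2 (∀ n, H n)).symm fun n => x n j) : ℂ) *
               (inner ℂ ((WithLp.equiv 2 (∀ n, H n)).symm fun n => y n j) h₂ : ℂ) ∂μ) ↔
      ((∀ (n : Fin N) (h₁ h₂ : H n),
          (inner ℂ h₁ h₂ : ℂ) = ∫ j, (inner ℂ h₁ (x n j) : ℂ) * (inner ℂ (y n j) h₂ : ℂ) ∂μ) ∧
        (∀ n₁ n₂ : Fin N, n₁ ≠ n₂ → ∀ (h : H n₂) (h' : H n₁),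
          ∫ j, (inner ℂ h (x n₂ j) : ℂ) * (inner ℂ (y n₁ j) h' : ℂ) ∂μ = 0)) := by
  -- MemLp facts
  have hxL2 : ∀ (n : Fin N) (h : H n), MemLp (fun j => (inner ℂ h (x n j) : ℂ)) 2 μ := fun n h =>
    memL2_of_bound (hxmeas n h) (ENNReal.mul_ne_top ENNReal.ofReal_ne_top (ENNReal.pow_ne_top ENNReal.coe_ne_top)) (hxB n h)
  have hyL2 : ∀ (n : Fin N) (h : H n), MemLp (fun j => (inner ℂ (y n j) h : ℂ)) 2 μ := by
    intro n h
    have hconj : (fun j => (inner ℂ (y n j) h : ℂ)) =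
        fun j => starRingEnd ℂ (inner ℂ h (y n j) : ℂ) := by
      ext j; rw [inner_conj_symm]
    rw [hconj]
    refine memL2_of_bound ?_ (C := ENNReal.ofReal (βy n) * (‖h‖₊ : ℝ≥0∞) ^ 2)
      (ENNReal.mul_ne_top ENNReal.ofReal_ne_top (ENNReal.pow_ne_top ENNReal.coe_ne_top)) ?_
    · exact (RCLike.continuous_conj.comp_aestronglyMeasurable (hymeas n h))
    · calc ∫⁻ j, (‖(starRingEnd ℂ) (inner ℂ h (y n j) : ℂ)‖₊ : ℝ≥0∞) ^ 2 ∂μ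
          = ∫⁻ j, (‖(inner ℂ h (y n j) : ℂ)‖₊ : ℝ≥0∞) ^ 2 ∂μ := by
            simp only [RCLike.nnnorm_conj]
        _ ≤ _ := hyB n h
  have hint : ∀ (n m : Fin N) (a : H n) (b : H m),
      Integrable (fun j => (inner ℂ a (x n j) : ℂ) * (inner ℂ (y m j) b : ℂ)) μ := fun n m a b =>
    integrable_mul_of_memL2 (hxL2 n a) (hyL2 m b)
  -- pointwise expansion of the direct-sum integrand
  have hexp : ∀ (h₁ h₂ : PiLp 2 H) (j : J),
      (inner ℂ h₁ ((WithLp.equiv 2 (∀ n, H n)).symm fun n => x n j) : ℂ) *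
        (inner ℂ ((WithLp.equiv 2 (∀ n, H n)).symm fun n => y n j) h₂ : ℂ) =
      ∑ n : Fin N, ∑ m : Fin N,
        (inner ℂ (h₁ n) (x n j) : ℂ) * (inner ℂ (y m j) (h₂ m) : ℂ) := by
    intro h₁ h₂ j
    rw [PiLp.inner_apply, PiLp.inner_apply, Finset.sum_mul_sum]
    rfl
  constructor
  · intro hdual
    constructor
    · intro n a b
      have h := hdual ((WithLp.equiv 2 (∀ n, H n)).symm (Pi.single n a))
        ((WithLp.equiv 2 (∀ n, H n)).symm (Pi.single n b))
      have hLHS : (inner ℂ ((WithLp.equiv 2 (∀ n, H n)).symm (Pi.single n a))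
          ((WithLp.equiv 2 (∀ n, H n)).symm (Pi.single n b)) : ℂ) = inner ℂ a b := by
        rw [PiLp.inner_apply]
        rw [Finset.sum_eq_single n]
        · simp
        · intro m _ hm
          simp [WithLp.equiv_symm_apply, Pi.single_eq_of_ne hm]
        · simp
      rw [hLHS] at h
      rw [h]
      congr 1; ext j
      rw [hexp]
      rw [Finset.sum_eq_single n]
      · rw [Finset.sum_eq_single n]
        · simp
        · intro m _ hm
          simp [WithLp.equiv_symm_apply, Pi.single_eq_of_ne hm]
        · simp
      · intro m _ hm
        have : ((WithLp.equiv 2 (∀ n, H n)).symm (Pi.single n a) : PiLp 2 H) m = 0 := by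
          simp [WithLp.equiv_symm_apply, Pi.single_eq_of_ne hm]
        rw [Finset.sum_eq_zero]
        intro k _
        simp only [this]
        simp [inner_zero_left]
      · simp
    · intro n₁ n₂ hne a b
      have h := hdual ((WithLp.equiv 2 (∀ n, H n)).symm (Pi.single n₂ a))
        ((WithLp.equiv 2 (∀ n, H n)).symm (Pi.single n₁ b))
      have hLHS : (inner ℂ ((WithLp.equiv 2 (∀ n, H n)).symm (Pi.single n₂ a))
          ((WithLp.equiv 2 (∀ n, H n)).symm (Pi.single n₁ b)) : ℂ) = 0 := by
        rw [PiLp.inner_apply]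
        apply Finset.sum_eq_zero
        intro m _
        rcases eq_or_ne m n₂ with rfl | hm
        · have : ((WithLp.equiv 2 (∀ n, H n)).symm (Pi.single n₁ b) : PiLp 2 H) m = 0 := by
            simp [WithLp.equiv_symm_apply, Pi.single_eq_of_ne hne.symm]
          rw [this, inner_zero_right]
        · have : ((WithLp.equiv 2 (∀ n, H n)).symm (Pi.single n₂ a) : PiLp 2 H) m = 0 := by
            simp [WithLp.equiv_symm_apply, Pi.single_eq_of_ne hm]
          rw [this, inner_zero_left]
      rw [hLHS] at h
      have hI : ∫ j, (inner ℂ ((WithLp.equiv 2 (∀ n, H n)).symm (Pi.single n₂ a))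
            ((WithLp.equiv 2 (∀ n, H n)).symm fun n => x n j) : ℂ) *
          (inner ℂ ((WithLp.equiv 2 (∀ n, H n)).symm fun n => y n j)
            ((WithLp.equiv 2 (∀ n, H n)).symm (Pi.single n₁ b)) : ℂ) ∂μ =
          ∫ j, (inner ℂ a (x n₂ j) : ℂ) * (inner ℂ (y n₁ j) b : ℂ) ∂μ := by
        congr 1; ext j
        rw [hexp]
        rw [Finset.sum_eq_single n₂]
        · rw [Finset.sum_eq_single n₁]
          · simp
          · intro m _ hm
            have : ((WithLp.equiv 2 (∀ n, H n)).symm (Pi.single n₁ b) : PiLp 2 H) m = 0 := by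
              simp [WithLp.equiv_symm_apply, Pi.single_eq_of_ne hm]
            simp [this, Pi.single_eq_of_ne hm]
          · simp
        · intro m _ hm
          have : ((WithLp.equiv 2 (∀ n, H n)).symm (Pi.single n₂ a) : PiLp 2 H) m = 0 := by
            simp [WithLp.equiv_symm_apply, Pi.single_eq_of_ne hm]
          rw [Finset.sum_eq_zero]
          intro k _
          simp [this, Pi.single_eq_of_ne hm]
        · simp
      rw [hI] at h
      exact h.symm
  · rintro ⟨hdiag, horth⟩ h₁ h₂
    have key : (inner ℂ h₁ h₂ : ℂ) = ∑ n : Fin N, ∑ m : Fin N,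
        ∫ j, (inner ℂ (h₁ n) (x n j) : ℂ) * (inner ℂ (y m j) (h₂ m) : ℂ) ∂μ := by
      rw [PiLp.inner_apply]
      refine Finset.sum_congr rfl fun n _ => ?_
      rw [Finset.sum_eq_single n]
      · exact hdiag n (h₁ n) (h₂ n)
      · intro m _ hm
        exact horth m n hm (h₁ n) (h₂ m)
      · simp
    rw [key]
    have hsum : (∑ n : Fin N, ∑ m : Fin N,
          ∫ j, (inner ℂ (h₁ n) (x n j) : ℂ) * (inner ℂ (y m j) (h₂ m) : ℂ) ∂μ)
        = ∫ j, ∑ n : Fin N, ∑ m : Fin N,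
            (inner ℂ (h₁ n) (x n j) : ℂ) * (inner ℂ (y m j) (h₂ m) : ℂ) ∂μ := by
      calc ∑ n : Fin N, ∑ m : Fin N,
              ∫ j, (inner ℂ (h₁ n) (x n j) : ℂ) * (inner ℂ (y m j) (h₂ m) : ℂ) ∂μ
          = ∑ n : Fin N, ∫ j, ∑ m : Fin N,
              (inner ℂ (h₁ n) (x n j) : ℂ) * (inner ℂ (y m j) (h₂ m) : ℂ) ∂μ :=
            Finset.sum_congr rfl fun n _ =>
              (integral_finset_sum _ (fun m _ => hint n m (h₁ n) (h₂ m))).symm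
        _ = ∫ j, ∑ n : Fin N, ∑ m : Fin N,
              (inner ℂ (h₁ n) (x n j) : ℂ) * (inner ℂ (y m j) (h₂ m) : ℂ) ∂μ :=
            (integral_finset_sum _ (fun n _ => integrable_finset_sum _
              (fun m _ => hint n m (h₁ n) (h₂ m)))).symm
    rw [hsum]
    congr 1; ext j
    exact (hexp h₁ h₂ j).symm
end

section
/- Let a : ℤ → ℂ be absolutely summable coefficients indexed by a countable subgroup-union Λ of the dual group Ĝ of an LCA group G, and suppose the almost periodic series z(x) = Σ_{α∈Λ} α(x) a(α) converges absolutely and z(x) = 0 for all x ∈ G. Then a(α) = 0 for every α ∈ Λ. -/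
open scoped ComplexConjugate

private theorem mult_lemma {G Λ : Type*} [AddCommGroup G]
    (d : Λ → AddChar G Circle) (a : Λ → ℂ) (ha : Summable fun α => ‖a α‖)
    (β : Λ)
    (hz : ∀ x : G, ∑' α, a α * (d α x : ℂ) = 0)
    (s : Finset Λ) (hs : ∀ α ∈ s, d α ≠ 1) (δ : ℝ) (hδ : 0 < δ) :
    ∃ M : Λ → ℂ, (∀ α, ‖M α‖ ≤ 1) ∧ (d β = 1 → M β = 1) ∧ (∀ α ∈ s, ‖M α‖ ≤ δ) ∧
      ∀ x : G, ∑' α, a α * M α * (d α x : ℂ) = 0 := by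
  classical
  induction s using Finset.induction with
  | empty =>
    exact ⟨fun _ => 1, fun _ => by simp, fun _ => rfl, by simp, by simpa using hz⟩
  | @insert γ s hγs ih =>
    obtain ⟨M, hM1, hMβ, hMs, hMz⟩ := ih (fun α hα => hs α (Finset.mem_insert_of_mem hα))
    have hdγ : d γ ≠ 1 := hs γ (Finset.mem_insert_self γ s)
    obtain ⟨g, hg⟩ := AddChar.ne_one_iff.mp hdγ
    set ζ : ℂ := (d γ g : ℂ) with hζ
    have hζ1 : ζ ≠ 1 := fun h => hg (Circle.coe_eq_one.mp h)
    have hζsub : 0 < ‖ζ - 1‖ := by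
      rw [norm_pos_iff]; exact sub_ne_zero.mpr hζ1
    have hζnorm : ‖ζ‖ = 1 := by
      rw [hζ]; simpa using Circle.norm_coe (d γ g)
    obtain ⟨N, hN⟩ := exists_nat_gt (max 1 (2 / (δ * ‖ζ - 1‖)))
    have hN1 : 1 ≤ (N : ℝ) := le_of_lt (lt_of_le_of_lt (le_max_left _ _) hN)
    have hN0 : (N : ℝ) ≠ 0 := by positivity
    have hN0' : (N : ℂ) ≠ 0 := by exact_mod_cast fun h => hN0 (by exact_mod_cast h)
    set μ : Λ → ℂ := fun α => (N : ℂ)⁻¹ * ∑ n ∈ Finset.range N, ((d α (n • g) : ℂ)) with hμ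
    have hnorm1 : ∀ (α : Λ) (x : G), ‖(d α x : ℂ)‖ = 1 := by
      intro α x; simpa using Circle.norm_coe (d α x)
    have hμle : ∀ α, ‖μ α‖ ≤ 1 := by
      intro α
      calc ‖μ α‖ ≤ ‖(N : ℂ)⁻¹‖ * ∑ n ∈ Finset.range N, ‖(d α (n • g) : ℂ)‖ := by
            rw [norm_mul]
            gcongr
            exact norm_sum_le _ _
        _ = 1 := by
            simp only [hnorm1]
            simp [Finset.sum_const, norm_inv, hN0]
    refine ⟨fun α => M α * μ α, ?_, ?_, ?_, ?_⟩
    · intro α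
      calc ‖M α * μ α‖ = ‖M α‖ * ‖μ α‖ := norm_mul _ _
        _ ≤ 1 * 1 := by gcongr; exacts [hM1 α, hμle α]
        _ = 1 := one_mul 1
    · intro hβ
      have hμβ : μ β = 1 := by
        simp only [hμ, hβ, AddChar.one_apply, Circle.coe_one, Finset.sum_const,
          Finset.card_range, nsmul_eq_mul, mul_one]
        exact inv_mul_cancel₀ hN0'
      show M β * μ β = 1
      rw [hMβ hβ, hμβ, mul_one]
    · intro α hα
      rcases Finset.mem_insert.mp hα with h | h
      · subst h
        have hpow : ∀ n : ℕ, (d α (n • g) : ℂ) = ζ ^ n := by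
          intro n
          rw [AddChar.map_nsmul_eq_pow]
          push_cast
          rfl
        have hgeom : μ α = (N : ℂ)⁻¹ * ((ζ ^ N - 1) / (ζ - 1)) := by
          rw [hμ]
          simp only [hpow]
          rw [geom_sum_eq hζ1]
        have : ‖μ α‖ ≤ (N : ℝ)⁻¹ * (2 / ‖ζ - 1‖) := by
          rw [hgeom, norm_mul, norm_inv, norm_div]
          push_cast
          simp only [Complex.norm_natCast]
          gcongr
          calc ‖ζ ^ N - 1‖ ≤ ‖ζ ^ N‖ + ‖(1 : ℂ)‖ := norm_sub_le _ _
            _ = 2 := by rw [norm_pow, hζnorm, one_pow]; norm_num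
        calc ‖M α * μ α‖ ≤ 1 * ‖μ α‖ := by rw [norm_mul]; gcongr; exact hM1 α
          _ = ‖μ α‖ := one_mul _
          _ ≤ (N : ℝ)⁻¹ * (2 / ‖ζ - 1‖) := this
          _ ≤ δ := by
              rw [inv_mul_le_iff₀ (by positivity)]
              have h2 : 2 / (δ * ‖ζ - 1‖) < N := lt_of_le_of_lt (le_max_right _ _) hN
              rw [div_lt_iff₀ (by positivity)] at h2
              rw [div_le_iff₀ hζsub]
              nlinarith
      · calc ‖M α * μ α‖ ≤ ‖M α‖ * 1 := by rw [norm_mul]; gcongr; exact hμle α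
          _ = ‖M α‖ := mul_one _
          _ ≤ δ := hMs α h
    · intro x
      have hsummand : ∀ α, a α * (M α * μ α) * (d α x : ℂ)
          = (N : ℂ)⁻¹ * ∑ n ∈ Finset.range N, (a α * M α * (d α (x + n • g) : ℂ)) := by
        intro α
        have h1 : ∀ n ∈ Finset.range N, a α * M α * ((d α (x + n • g) : ℂ))
            = (a α * M α * (d α x : ℂ)) * ((d α (n • g) : ℂ)) := by
          intro n _
          rw [AddChar.map_add_eq_mul, Circle.coe_mul]
          ring
        rw [Finset.sum_congr rfl h1, ← Finset.mul_sum]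
        simp only [hμ]
        ring
      calc ∑' α, a α * (M α * μ α) * (d α x : ℂ)
          = ∑' α, (N : ℂ)⁻¹ * ∑ n ∈ Finset.range N, (a α * M α * (d α (x + n • g) : ℂ)) := by
            exact tsum_congr hsummand
        _ = (N : ℂ)⁻¹ * ∑' α, ∑ n ∈ Finset.range N, (a α * M α * (d α (x + n • g) : ℂ)) :=
            tsum_mul_left
        _ = (N : ℂ)⁻¹ * ∑ n ∈ Finset.range N, ∑' α, (a α * M α * (d α (x + n • g) : ℂ)) := by
            congr 1
            refine Summable.tsum_finsetSum fun n _ => ?_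
            apply Summable.of_norm_bounded ha
            intro α
            rw [norm_mul, norm_mul, hnorm1, mul_one]
            calc ‖a α‖ * ‖M α‖ ≤ ‖a α‖ * 1 := by gcongr; exact hM1 α
              _ = ‖a α‖ := mul_one _
        _ = 0 := by
            rw [Finset.sum_congr rfl (fun n _ => hMz (x + n • g))]
            simp

private theorem key_lemma {G Λ : Type*} [AddCommGroup G]
    (d : Λ → AddChar G Circle) (a : Λ → ℂ) (ha : Summable fun α => ‖a α‖)
    (β : Λ) (hdβ : d β = 1) (hd : ∀ α, α ≠ β → d α ≠ 1)
    (hz : ∀ x : G, ∑' α, a α * (d α x : ℂ) = 0) : a β = 0 := by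
  classical
  by_contra hne
  have hpos : 0 < ‖a β‖ := norm_pos_iff.mpr hne
  set ε : ℝ := ‖a β‖ / 2 with hε
  have hεpos : 0 < ε := by positivity
  -- choose finite set F with small tail
  set T : ℝ := ∑' α, ‖a α‖ with hT
  obtain ⟨F, hF⟩ : ∃ F : Finset Λ, T - ε / 2 < ∑ α ∈ F, ‖a α‖ := by
    have h2 : Filter.Tendsto (fun s : Finset Λ => ∑ α ∈ s, ‖a α‖) Filter.atTop (nhds T) :=
      ha.hasSum
    have h3 := h2.eventually (eventually_gt_nhds (by linarith : T - ε / 2 < T))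
    obtain ⟨F, hF⟩ := h3.exists
    exact ⟨F, hF⟩
  have htail : ∑' (α : {α // α ∉ F}), ‖a α‖ ≤ ε / 2 := by
    have := Summable.sum_add_tsum_compl (s := F) ha
    have h4 : ∑' (α : ↑(↑F : Set Λ)ᶜ), ‖a (α : Λ)‖ = T - ∑ α ∈ F, ‖a α‖ := by
      linarith [this]
    calc ∑' (α : {α // α ∉ F}), ‖a α‖ = T - ∑ α ∈ F, ‖a α‖ := h4
      _ ≤ ε / 2 := by linarith
  set C : ℝ := 1 + T with hC
  have hTnonneg : 0 ≤ T := tsum_nonneg fun α => norm_nonneg _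
  have hCpos : 0 < C := by positivity
  set δ : ℝ := ε / (2 * C) with hδdef
  have hδpos : 0 < δ := by positivity
  obtain ⟨M, hM1, hMβ, hMs, hMz⟩ := mult_lemma d a ha β hz (F.erase β)
    (fun α hα => hd α (Finset.ne_of_mem_erase hα)) δ hδpos
  -- evaluate at 0
  have h0 := hMz 0
  simp only [AddChar.map_zero_eq_one, Circle.coe_one, mul_one] at h0
  -- f α := a α * M α
  set f : Λ → ℂ := fun α => a α * M α with hf
  have hfs : Summable f := by
    apply Summable.of_norm_bounded ha
    intro α
    rw [hf, norm_mul]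
    calc ‖a α‖ * ‖M α‖ ≤ ‖a α‖ * 1 := by gcongr; exact hM1 α
      _ = ‖a α‖ := mul_one _
  have hsplit := Summable.tsum_eq_add_tsum_ite hfs β
  rw [h0] at hsplit
  have hfβ : f β = a β := by rw [hf]; simp [hMβ hdβ]
  -- bound the remainder
  set r : Λ → ℂ := fun α => if α = β then 0 else f α with hr
  have hrs : Summable fun α => ‖r α‖ := by
    apply Summable.of_nonneg_of_le (fun α => norm_nonneg _) _ ha
    intro α
    rw [hr]
    by_cases h : α = β
    · simp [h]
    · simp only [if_neg h, hf, norm_mul]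
      calc ‖a α‖ * ‖M α‖ ≤ ‖a α‖ * 1 := by gcongr; exact hM1 α
        _ = ‖a α‖ := mul_one _
  set h : Λ → ℝ := fun α => δ * ‖a α‖ + Set.indicator (↑F : Set Λ)ᶜ (fun α => ‖a α‖) α with hh
  have hhs : Summable h := by
    apply Summable.add (ha.mul_left δ)
    exact ha.indicator _
  have hbound : ∀ α, ‖r α‖ ≤ h α := by
    intro α
    rw [hr, hh]
    by_cases hβ' : α = β
    · simp only [if_pos hβ', norm_zero]
      exact add_nonneg (by positivity) (Set.indicator_nonneg (fun _ _ => norm_nonneg _) _)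
    · simp only [if_neg hβ']
      by_cases hFmem : α ∈ F
      · have hαe : α ∈ F.erase β := Finset.mem_erase.mpr ⟨hβ', hFmem⟩
        have : Set.indicator (↑F : Set Λ)ᶜ (fun α => ‖a α‖) α = 0 := by
          simp [Set.indicator_of_notMem, hFmem]
        rw [this, add_zero, hf, norm_mul, mul_comm]
        gcongr
        exact hMs α hαe
      · have : Set.indicator (↑F : Set Λ)ᶜ (fun α => ‖a α‖) α = ‖a α‖ := by
          simp [Set.indicator_of_mem, hFmem]
        rw [this, hf, norm_mul]
        calc ‖a α‖ * ‖M α‖ ≤ ‖a α‖ * 1 := by gcongr; exact hM1 α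
          _ = ‖a α‖ := mul_one _
          _ ≤ δ * ‖a α‖ + ‖a α‖ := le_add_of_nonneg_left (by positivity)
  have hrle : ‖∑' α, r α‖ ≤ δ * T + ε / 2 := by
    calc ‖∑' α, r α‖ ≤ ∑' α, ‖r α‖ := norm_tsum_le_tsum_norm hrs
      _ ≤ ∑' α, h α := Summable.tsum_le_tsum hbound hrs hhs
      _ = δ * T + ∑' α, Set.indicator (↑F : Set Λ)ᶜ (fun α => ‖a α‖) α := by
          rw [hh, Summable.tsum_add (ha.mul_left δ) (ha.indicator _), tsum_mul_left]
      _ ≤ δ * T + ε / 2 := by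
          gcongr
          rw [← tsum_subtype]
          exact htail
  -- conclude
  have habs : ‖a β‖ ≤ δ * T + ε / 2 := by
    have h5 : f β = -(tsum r) := eq_neg_of_add_eq_zero_left hsplit.symm
    rw [hfβ] at h5
    rw [h5, norm_neg]
    exact hrle
  have hδT : δ * T ≤ ε / 2 := by
    rw [hδdef]
    rw [div_mul_eq_mul_div, div_le_div_iff₀ (by positivity) (by norm_num)]
    nlinarith
  have : ‖a β‖ ≤ ε := by linarith
  rw [hε] at this
  linarith

/-- Uniqueness theorem for generalized (almost periodic) Fourier series: if `{c α}` is a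
countable family of distinct (unitary circle-valued) characters of an abelian group `G`,
`a` is absolutely summable, and the almost periodic series `∑ α, (c α x) * a α` vanishes
for every `x ∈ G`, then all coefficients `a α` vanish. -/
theorem stmt_13 {G : Type*} [AddCommGroup G]
    {Λ : Type*} [Countable Λ]
    (c : Λ → AddChar G Circle) (hc : Function.Injective c)
    (a : Λ → ℂ) (ha : Summable fun α => ‖a α‖)
    (hz : ∀ x : G, ∑' α, ((c α x : ℂ) * a α) = 0) :
    ∀ α, a α = 0 := by
  intro β
  apply key_lemma (fun α => c α / c β) a ha β
  · exact div_self' (c β)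
  · intro α hα h1
    exact hα (hc (div_eq_one.mp h1))
  · intro x
    have heq : ∀ α, a α * (((c α / c β) x : Circle) : ℂ)
        = ((c β x : ℂ))⁻¹ * ((c α x : ℂ) * a α) := by
      intro α
      rw [AddChar.div_apply']
      push_cast
      ring
    rw [tsum_congr heq, tsum_mul_left, hz x, mul_zero]
end

section
/- Let {x_j^(n)}_{j∈J}, 1 ≤ n ≤ N, be Bessel families in Hilbert spaces H_n over a common measure space (J, Σ, μ). The direct-sum family {⊕_{n=1}^N x_j^(n)} is a Parseval continuous frame for H₁ ⊕ ⋯ ⊕ H_N if and only if (i) each {x_j^(n)} is a Parseval continuous frame for H_n, and (ii) for each n₁ ≠ n₂, the families {x_j^(n₁)} and {x_j^(n₂)} are orthogonal, i.e., ∫_J ⟨h, x_j^(n₂)⟩ x_j^(n₁) dμ(j) = 0 for all h ∈ H_{n₂}. -/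
open MeasureTheory
open scoped ENNReal NNReal

/-- The direct-sum family `{⊕ₙ x n j}` of Bessel families is a Parseval continuous frame
for the Hilbert direct sum `H₁ ⊕ ⋯ ⊕ H_N` if and only if each `{x n j}` is a Parseval
continuous frame for `H n` and for all `n₁ ≠ n₂` the families `{x n₂ j}` and `{x n₁ j}`
are orthogonal (the weakly defined mixed dual Gramian vanishes). -/
theorem stmt_19 {N : ℕ} {H : Fin N → Type*} [∀ n, NormedAddCommGroup (H n)]
    [∀ n, InnerProductSpace ℂ (H n)] [∀ n, CompleteSpace (H n)]
    {J : Type*} [MeasurableSpace J] (μ : Measure J)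
    (x : (n : Fin N) → J → H n)
    (hxmeas : ∀ (n : Fin N) (h : H n),
      AEStronglyMeasurable (fun j => (inner ℂ h (x n j) : ℂ)) μ)
    (β : Fin N → ℝ)
    (hB : ∀ (n : Fin N) (h : H n), ∫⁻ j, (‖(inner ℂ h (x n j) : ℂ)‖₊ : ℝ≥0∞) ^ 2 ∂μ ≤
      ENNReal.ofReal (β n) * (‖h‖₊ : ℝ≥0∞) ^ 2) :
    (∀ h : PiLp 2 H,
        ∫ j, ‖(inner ℂ h ((WithLp.equiv 2 (∀ n, H n)).symm fun n => x n j) : ℂ)‖ ^ 2 ∂μ =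
          ‖h‖ ^ 2) ↔
      ((∀ (n : Fin N) (h : H n), ∫ j, ‖(inner ℂ h (x n j) : ℂ)‖ ^ 2 ∂μ = ‖h‖ ^ 2) ∧
        (∀ n₁ n₂ : Fin N, n₁ ≠ n₂ → ∀ (h : H n₂) (h' : H n₁),
          ∫ j, (inner ℂ h (x n₂ j) : ℂ) * (inner ℂ (x n₁ j) h' : ℂ) ∂μ = 0)) := by
  classical
  set c : (n : Fin N) → H n → J → ℂ := fun n h j => inner ℂ h (x n j) with hc
  have hmem : ∀ (n : Fin N) (h : H n), MemLp (c n h) 2 μ := by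
    intro n h
    refine ⟨hxmeas n h, ?_⟩
    rw [eLpNorm_eq_lintegral_rpow_enorm_toReal two_ne_zero ENNReal.ofNat_ne_top]
    refine ENNReal.rpow_lt_top_of_nonneg (by positivity) (ne_of_lt ?_)
    have h2 : ∀ j : J, ((‖c n h j‖₊ : ℝ≥0∞)) ^ (2 : ℝ≥0∞).toReal
        = (‖c n h j‖₊ : ℝ≥0∞) ^ (2 : ℕ) := by
      intro j
      rw [ENNReal.toReal_ofNat, ← ENNReal.rpow_natCast]
      norm_num
    calc ∫⁻ j, ((‖c n h j‖₊ : ℝ≥0∞)) ^ (2 : ℝ≥0∞).toReal ∂μ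
        = ∫⁻ j, (‖c n h j‖₊ : ℝ≥0∞) ^ (2 : ℕ) ∂μ := by
          exact lintegral_congr h2
      _ ≤ ENNReal.ofReal (β n) * (‖h‖₊ : ℝ≥0∞) ^ 2 := hB n h
      _ < ⊤ := by
          exact lt_of_le_of_lt le_rfl
            (lt_of_le_of_ne le_top (ENNReal.mul_ne_top ENNReal.ofReal_ne_top (by simp)))
  have hint : ∀ (n m : Fin N) (h : H n) (h' : H m),
      Integrable (fun j => c n h j * (starRingEnd ℂ) (c m h' j)) μ := by
    intro n m h h'
    have h1 := L2.integrable_inner (𝕜 := ℂ)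
      ((hmem m h').toLp _) ((hmem n h).toLp _)
    refine h1.congr ?_
    filter_upwards [MemLp.coeFn_toLp (hmem m h'), MemLp.coeFn_toLp (hmem n h)] with j hj1 hj2
    rw [hj1, hj2, RCLike.inner_apply, mul_comm]
  have hsq : ∀ z : ℂ, (‖z‖ : ℝ) ^ 2 = (z * (starRingEnd ℂ) z).re := by
    intro z
    rw [Complex.mul_conj]
    simp [Complex.normSq_eq_norm_sq, ← Complex.ofReal_pow]
  have hintsq : ∀ (n : Fin N) (h : H n), Integrable (fun j => ‖c n h j‖ ^ 2) μ :=
    fun n h => (memLp_two_iff_integrable_sq_norm (hxmeas n h)).mp (hmem n h)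
  have hdiag : ∀ (n : Fin N) (h : H n),
      ∫ j, c n h j * (starRingEnd ℂ) (c n h j) ∂μ = ((∫ j, ‖c n h j‖ ^ 2 ∂μ : ℝ) : ℂ) := by
    intro n h
    calc ∫ j, c n h j * (starRingEnd ℂ) (c n h j) ∂μ
        = ∫ j, ((‖c n h j‖ ^ 2 : ℝ) : ℂ) ∂μ := by
          refine integral_congr_ae (Filter.Eventually.of_forall fun j => ?_)
          simp only []
          rw [Complex.mul_conj]
          norm_cast
          simp [Complex.normSq_eq_norm_sq]
      _ = ((∫ j, ‖c n h j‖ ^ 2 ∂μ : ℝ) : ℂ) := integral_ofReal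
  have expand2 : ∀ (f g : J → ℂ), MemLp f 2 μ → MemLp g 2 μ →
      ∫ j, ‖f j + g j‖ ^ 2 ∂μ
        = ∫ j, ‖f j‖ ^ 2 ∂μ + ∫ j, ‖g j‖ ^ 2 ∂μ
          + 2 * (∫ j, g j * (starRingEnd ℂ) (f j) ∂μ).re := by
    intro f g hf hg
    have hif : Integrable (fun j => ‖f j‖ ^ 2) μ :=
      (memLp_two_iff_integrable_sq_norm hf.1).mp hf
    have hig : Integrable (fun j => ‖g j‖ ^ 2) μ :=
      (memLp_two_iff_integrable_sq_norm hg.1).mp hg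
    have hic : Integrable (fun j => g j * (starRingEnd ℂ) (f j)) μ := by
      have h1 := L2.integrable_inner (𝕜 := ℂ) (hf.toLp _) (hg.toLp _)
      refine h1.congr ?_
      filter_upwards [hf.coeFn_toLp, hg.coeFn_toLp] with j hj1 hj2
      rw [hj1, hj2, RCLike.inner_apply, mul_comm]
    have hpt : ∀ j, ‖f j + g j‖ ^ 2
        = ‖f j‖ ^ 2 + ‖g j‖ ^ 2 + 2 * (g j * (starRingEnd ℂ) (f j)).re := by
      intro j
      rw [hsq, hsq, hsq]
      have : (f j + g j) * (starRingEnd ℂ) (f j + g j)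
          = f j * (starRingEnd ℂ) (f j) + g j * (starRingEnd ℂ) (g j)
            + (f j * (starRingEnd ℂ) (g j) + g j * (starRingEnd ℂ) (f j)) := by
        ring_nf
        rw [map_add]
        ring
      rw [this]
      have h2 : (f j * (starRingEnd ℂ) (g j)).re = (g j * (starRingEnd ℂ) (f j)).re := by
        rw [← Complex.conj_re (g j * (starRingEnd ℂ) (f j))]
        congr 1
        rw [map_mul]
        simp [mul_comm]
      simp only [Complex.add_re]
      rw [h2]; ring
    calc ∫ j, ‖f j + g j‖ ^ 2 ∂μ
        = ∫ j, (‖f j‖ ^ 2 + ‖g j‖ ^ 2 + 2 * (g j * (starRingEnd ℂ) (f j)).re) ∂μ := by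
          exact integral_congr_ae (Filter.Eventually.of_forall fun j => hpt j)
      _ = ∫ j, ‖f j‖ ^ 2 ∂μ + ∫ j, ‖g j‖ ^ 2 ∂μ
            + 2 * ∫ j, (g j * (starRingEnd ℂ) (f j)).re ∂μ := by
          have i1 : Integrable (fun j => ‖f j‖ ^ 2 + ‖g j‖ ^ 2) μ := hif.add hig
          have i2 : Integrable (fun j => 2 * ((g j * (starRingEnd ℂ) (f j)).re)) μ :=
            (hic.re).const_mul 2
          rw [integral_add i1 i2, integral_add hif hig, integral_const_mul]
      _ = _ := by
          have := integral_re hic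
          exact congrArg (fun t => ∫ j, ‖f j‖ ^ 2 ∂μ + ∫ j, ‖g j‖ ^ 2 ∂μ + 2 * t) this
  have hLHS : ∀ (h : PiLp 2 H) (j : J),
      (inner ℂ h ((WithLp.equiv 2 (∀ n, H n)).symm fun n => x n j) : ℂ) = ∑ n, c n (h n) j := by
    intro h j
    rw [PiLp.inner_apply]
    exact Finset.sum_congr rfl fun n _ => by rw [WithLp.equiv_symm_apply, PiLp.toLp_apply]
  have key : ∀ h : PiLp 2 H,
      ∫ j, ‖∑ n, c n (h n) j‖ ^ 2 ∂μ
        = (∑ n, ∑ m, ∫ j, c n (h n) j * (starRingEnd ℂ) (c m (h m) j) ∂μ).re := by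
    intro h
    have hpt : (fun j => (∑ n, c n (h n) j) * (starRingEnd ℂ) (∑ m, c m (h m) j))
        = fun j => ∑ n, ∑ m, c n (h n) j * (starRingEnd ℂ) (c m (h m) j) := by
      funext j
      rw [map_sum, Finset.sum_mul_sum]
    have hInt : Integrable (fun j => (∑ n, c n (h n) j) * (starRingEnd ℂ) (∑ m, c m (h m) j)) μ := by
      rw [hpt]
      exact integrable_finset_sum _ fun n _ => integrable_finset_sum _ fun m _ => hint n m _ _
    calc ∫ j, ‖∑ n, c n (h n) j‖ ^ 2 ∂μ
        = ∫ j, ((∑ n, c n (h n) j) * (starRingEnd ℂ) (∑ m, c m (h m) j)).re ∂μ := by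
          exact integral_congr_ae (Filter.Eventually.of_forall fun j => hsq _)
      _ = (∫ j, (∑ n, c n (h n) j) * (starRingEnd ℂ) (∑ m, c m (h m) j) ∂μ).re :=
          integral_re hInt
      _ = _ := by
          rw [hpt, integral_finset_sum _ fun n _ =>
            integrable_finset_sum _ fun m _ => hint n m _ _]
          congr 1
          exact Finset.sum_congr rfl fun n _ => integral_finset_sum _ fun m _ => hint n m _ _
  constructor
  · intro P
    have P' : ∀ h : PiLp 2 H, ∫ j, ‖∑ n, c n (h n) j‖ ^ 2 ∂μ = ∑ n, ‖h n‖ ^ 2 := by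
      intro h
      rw [← PiLp.norm_sq_eq_of_L2, ← P h]
      exact integral_congr_ae (Filter.Eventually.of_forall fun j => by simp only [hLHS])
    have hPar : ∀ (n : Fin N) (h : H n), ∫ j, ‖c n h j‖ ^ 2 ∂μ = ‖h‖ ^ 2 := by
      intro n h
      have hP := P' ((WithLp.equiv 2 (∀ n, H n)).symm (Pi.single n h))
      simp only [WithLp.equiv_symm_apply, PiLp.toLp_apply] at hP
      have h1 : ∀ j, (∑ m, c m ((Pi.single n h : ∀ k, H k) m) j) = c n h j := by
        intro j
        rw [Finset.sum_eq_single_of_mem n (Finset.mem_univ n) (fun m _ hm => by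
          rw [Pi.single_eq_of_ne hm]; simp [hc]), Pi.single_eq_same]
      have h2 : (∑ m, ‖(Pi.single n h : ∀ k, H k) m‖ ^ 2) = ‖h‖ ^ 2 := by
        rw [Finset.sum_eq_single_of_mem n (Finset.mem_univ n) (fun m _ hm => by
          rw [Pi.single_eq_of_ne hm]; simp), Pi.single_eq_same]
      rw [← h2, ← hP]
      exact integral_congr_ae (Filter.Eventually.of_forall fun j => by simp only [h1])
    refine ⟨hPar, ?_⟩
    intro n₁ n₂ hne h h'
    set I : ℂ := ∫ j, c n₂ h j * (starRingEnd ℂ) (c n₁ h' j) ∂μ with hI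
    have main : ∀ a : ℂ, (a * I).re = 0 := by
      intro a
      set u : PiLp 2 H := (WithLp.equiv 2 (∀ n, H n)).symm
        (Pi.single n₁ (a • h') + Pi.single n₂ h) with hu
      have hu1 : u n₁ = a • h' := by
        simp [hu, WithLp.equiv_symm_apply, PiLp.toLp_apply, Pi.single_eq_of_ne hne]
      have hu2 : u n₂ = h := by
        simp [hu, WithLp.equiv_symm_apply, PiLp.toLp_apply, Pi.single_eq_of_ne hne.symm]
      have hu0 : ∀ m, m ≠ n₁ → m ≠ n₂ → u m = 0 := by
        intro m hm1 hm2
        simp [hu, WithLp.equiv_symm_apply, PiLp.toLp_apply, Pi.single_eq_of_ne hm1, Pi.single_eq_of_ne hm2]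
      have hsum : ∀ j, (∑ m, c m (u m) j)
          = (starRingEnd ℂ) a * c n₁ h' j + c n₂ h j := by
        intro j
        have hz : ∀ m ∈ (Finset.univ : Finset (Fin N)), m ∉ ({n₁, n₂} : Finset (Fin N)) →
            c m (u m) j = 0 := by
          intro m _ hm
          simp only [Finset.mem_insert, Finset.mem_singleton, not_or] at hm
          rw [hu0 m hm.1 hm.2]
          simp [hc]
        rw [← Finset.sum_subset (Finset.subset_univ ({n₁, n₂} : Finset (Fin N))) hz,
          Finset.sum_pair hne, hu1, hu2]
        congr 1
        simp [hc, inner_smul_left, mul_comm]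
      have hnormu : ∀ m, ‖u m‖ ^ 2 = (if m = n₁ then ‖a‖ ^ 2 * ‖h'‖ ^ 2 else 0)
          + (if m = n₂ then ‖h‖ ^ 2 else 0) := by
        intro m
        by_cases hm1 : m = n₁
        · subst hm1
          rw [hu1, if_pos rfl, if_neg hne, norm_smul]
          ring
        · by_cases hm2 : m = n₂
          · subst hm2
            rw [hu2, if_neg hm1, if_pos rfl]
            ring
          · rw [hu0 m hm1 hm2, if_neg hm1, if_neg hm2]
            simp
      have hPu := P' u
      have hRHS : (∑ m, ‖u m‖ ^ 2) = ‖a‖ ^ 2 * ‖h'‖ ^ 2 + ‖h‖ ^ 2 := by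
        rw [Finset.sum_congr rfl fun m _ => hnormu m, Finset.sum_add_distrib]
        rw [Finset.sum_ite_eq' Finset.univ n₁ fun _ => ‖a‖ ^ 2 * ‖h'‖ ^ 2,
          Finset.sum_ite_eq' Finset.univ n₂ fun _ => ‖h‖ ^ 2]
        simp
      have hLHSu : ∫ j, ‖∑ m, c m (u m) j‖ ^ 2 ∂μ
          = ‖a‖ ^ 2 * ‖h'‖ ^ 2 + ‖h‖ ^ 2 + 2 * (a * I).re := by
        have e1 : ∫ j, ‖∑ m, c m (u m) j‖ ^ 2 ∂μ
            = ∫ j, ‖(starRingEnd ℂ) a * c n₁ h' j + c n₂ h j‖ ^ 2 ∂μ :=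
          integral_congr_ae (Filter.Eventually.of_forall fun j => by simp only []; rw [hsum])
        rw [e1, expand2 _ _ ((hmem n₁ h').const_mul _) (hmem n₂ h)]
        have e2 : ∫ j, ‖(starRingEnd ℂ) a * c n₁ h' j‖ ^ 2 ∂μ = ‖a‖ ^ 2 * ‖h'‖ ^ 2 := by
          have : ∀ j, ‖(starRingEnd ℂ) a * c n₁ h' j‖ ^ 2 = ‖a‖ ^ 2 * ‖c n₁ h' j‖ ^ 2 := by
            intro j
            rw [norm_mul, RCLike.norm_conj]
            ring
          rw [integral_congr_ae (Filter.Eventually.of_forall fun j => this j),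
            integral_const_mul, hPar n₁ h']
        have e3 : ∫ j, c n₂ h j * (starRingEnd ℂ) ((starRingEnd ℂ) a * c n₁ h' j) ∂μ = a * I := by
          rw [hI, ← integral_const_mul]
          refine integral_congr_ae (Filter.Eventually.of_forall fun j => ?_)
          simp only []
          rw [map_mul, Complex.conj_conj]
          ring
        rw [e2, e3, hPar n₂ h]
      rw [hPu, hRHS] at hLHSu
      linarith [hLHSu]
    have h1 := main 1
    have h2 := main Complex.I
    rw [one_mul] at h1
    have h2' : I.im = 0 := by
      have : (Complex.I * I).re = -I.im := by simp [Complex.mul_re]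
      rw [this] at h2
      linarith
    have hIzero : I = 0 := Complex.ext h1 h2'
    rw [← hIzero, hI]
    refine integral_congr_ae (Filter.Eventually.of_forall fun j => ?_)
    simp only []
    rw [← inner_conj_symm (x n₁ j) h']
  · rintro ⟨hPar, hOrth⟩ h
    have e1 : ∫ j, ‖(inner ℂ h ((WithLp.equiv 2 (∀ n, H n)).symm fun n => x n j) : ℂ)‖ ^ 2 ∂μ
        = ∫ j, ‖∑ n, c n (h n) j‖ ^ 2 ∂μ :=
      integral_congr_ae (Filter.Eventually.of_forall fun j => by simp only [hLHS])
    rw [e1, key h, PiLp.norm_sq_eq_of_L2]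
    have hzero : ∀ n m : Fin N, n ≠ m →
        ∫ j, c n (h n) j * (starRingEnd ℂ) (c m (h m) j) ∂μ = 0 := by
      intro n m hnm
      have h0 := hOrth m n (fun e => hnm e.symm) (h n) (h m)
      rw [← h0]
      refine integral_congr_ae (Filter.Eventually.of_forall fun j => ?_)
      simp only []
      rw [← inner_conj_symm (x m j) (h m)]
    have hsum : (∑ n, ∑ m, ∫ j, c n (h n) j * (starRingEnd ℂ) (c m (h m) j) ∂μ)
        = ∑ n, ((‖h n‖ ^ 2 : ℝ) : ℂ) := by
      refine Finset.sum_congr rfl fun n _ => ?_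
      rw [Finset.sum_eq_single_of_mem n (Finset.mem_univ n)
        (fun m _ hm => hzero n m (fun e => hm e.symm)), hdiag n (h n), hPar n (h n)]
    rw [hsum]
    simp [← Complex.ofReal_pow]
end
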